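/- Let η ∈ (0,1], let A ∈ ℝ^{n×n} be an orthogonal projection matrix (Aᵀ = A and A·A = A), and let v ∈ ℝ^n be a unit vector (‖v‖₂ = 1). Then the matrix S = η A + (I − η A) v vᵀ has nonnegative quadratic form: ⟨x, S x⟩ ≥ 0 for every x ∈ ℝ^n. -/

import Mathlib

open Matrix
open scoped RealInnerProductSpace

/-- The action of a real matrix on vectors of `EuclideanSpace`. -/
noncomputable def mulVecE {m n : Type*} [Fintype m] [Fintype n] [DecidableEq n]
    (A : Matrix m n ℝ) (v : EuclideanSpace ℝ n) : EuclideanSpace ℝ m :=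
  Matrix.toEuclideanLin A v

/-- **Nonnegativity of the quadratic form of `ηA + (I - ηA)vvᵀ`.**
If `A` is an orthogonal projection matrix, `η ∈ (0,1]`, and `v` is a unit vector, then
`S = ηA + (I - ηA)vvᵀ` satisfies `⟨x, Sx⟩ ≥ 0` for every `x`. -/
lemma inner_mulVecE {n : ℕ} (M : Matrix (Fin n) (Fin n) ℝ) (x y : EuclideanSpace ℝ (Fin n)) :
    ⟪x, mulVecE M y⟫ = (x : Fin n → ℝ) ⬝ᵥ (M *ᵥ (y : Fin n → ℝ)) := by
  simp [mulVecE, Matrix.toEuclideanLin_apply, PiLp.inner_apply, dotProduct, RCLike.inner_apply]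
  exact Finset.sum_congr rfl fun _ _ => mul_comm _ _

theorem projection_rank_one_mix_nonneg_quadratic_form
    {n : ℕ} (η : ℝ) (hη0 : 0 < η) (hη1 : η ≤ 1)
    (A : Matrix (Fin n) (Fin n) ℝ) (hAsymm : Aᵀ = A) (hAproj : A * A = A)
    (v : EuclideanSpace ℝ (Fin n)) (hv : ‖v‖ = 1)
    (S : Matrix (Fin n) (Fin n) ℝ)
    (hS : S = η • A + ((1 : Matrix (Fin n) (Fin n) ℝ) - η • A) *
        Matrix.of (fun i j => v i * v j)) :
    ∀ x : EuclideanSpace ℝ (Fin n), 0 ≤ ⟪x, mulVecE S x⟫ := by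
  intro x
  rw [inner_mulVecE]
  -- vvᵀ *ᵥ x = (v ⬝ᵥ x) • v
  have hvvT : (Matrix.of (fun i j => v i * v j)) *ᵥ (x : Fin n → ℝ)
      = ((v : Fin n → ℝ) ⬝ᵥ (x : Fin n → ℝ)) • (v : Fin n → ℝ) := by
    funext i
    simp [Matrix.mulVec, dotProduct, Finset.mul_sum, Finset.sum_mul, mul_assoc]
    exact Finset.sum_congr rfl fun j _ => by ring
  set t : ℝ := (v : Fin n → ℝ) ⬝ᵥ (x : Fin n → ℝ) with ht
  -- expand S
  have hexp : (x : Fin n → ℝ) ⬝ᵥ (S *ᵥ (x : Fin n → ℝ))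
      = η * ((x : Fin n → ℝ) ⬝ᵥ (A *ᵥ x)) + t * ((x : Fin n → ℝ) ⬝ᵥ (v : Fin n → ℝ))
        - η * t * ((x : Fin n → ℝ) ⬝ᵥ (A *ᵥ (v : Fin n → ℝ))) := by
    rw [hS]
    rw [Matrix.add_mulVec, Matrix.sub_mul, Matrix.one_mul, Matrix.sub_mulVec,
      Matrix.smul_mulVec, ← Matrix.mulVec_mulVec, hvvT]
    have h1 : (x : Fin n → ℝ) ⬝ᵥ A *ᵥ (t • (v : Fin n → ℝ)) = t * ((x : Fin n → ℝ) ⬝ᵥ A *ᵥ (v : Fin n → ℝ)) := by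
      rw [Matrix.mulVec_smul, dotProduct_smul, smul_eq_mul]
    have h2 : (x : Fin n → ℝ) ⬝ᵥ (t • (v : Fin n → ℝ)) = t * ((x : Fin n → ℝ) ⬝ᵥ (v : Fin n → ℝ)) := by
      rw [dotProduct_smul, smul_eq_mul]
    simp only [dotProduct_add, dotProduct_sub, Matrix.smul_mulVec, dotProduct_smul,
      smul_eq_mul, h1, h2]
    ring
  rw [hexp]
  -- symmetry/idempotency rewrites
  have key : ∀ y : Fin n → ℝ, (x : Fin n → ℝ) ⬝ᵥ (A *ᵥ y) = (A *ᵥ (x : Fin n → ℝ)) ⬝ᵥ (A *ᵥ y) := by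
    intro y
    conv_lhs => rw [← hAproj]
    rw [← Matrix.mulVec_mulVec, Matrix.dotProduct_mulVec ((x : Fin n → ℝ)) A,
      ← Matrix.mulVec_transpose, hAsymm]
  rw [key (x : Fin n → ℝ), key (v : Fin n → ℝ)]
  set y := A *ᵥ (x : Fin n → ℝ)
  set w := A *ᵥ (v : Fin n → ℝ)
  have hxv : (x : Fin n → ℝ) ⬝ᵥ (v : Fin n → ℝ) = t := by
    rw [ht]; exact dotProduct_comm _ _
  rw [hxv]
  -- dot products as Euclid inner
  have hyy : (0:ℝ) ≤ y ⬝ᵥ y := by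
    simp [dotProduct]
    exact Finset.sum_nonneg fun i _ => mul_self_nonneg _
  have hww : (0:ℝ) ≤ w ⬝ᵥ w := by
    simp [dotProduct]
    exact Finset.sum_nonneg fun i _ => mul_self_nonneg _
  -- Cauchy-Schwarz: (y ⬝ᵥ w)^2 ≤ (y⬝ᵥy)(w⬝ᵥw)
  have hcs : (y ⬝ᵥ w)^2 ≤ (y ⬝ᵥ y) * (w ⬝ᵥ w) := by
    have := @real_inner_mul_inner_self_le (EuclideanSpace ℝ (Fin n)) _ _
      ((WithLp.equiv 2 _).symm y) ((WithLp.equiv 2 _).symm w)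
    simpa [-inner_self_eq_norm_sq_to_K, PiLp.inner_apply, RCLike.inner_apply, dotProduct, sq, mul_comm] using this
  -- ‖w‖² ≤ 1 : w⬝ᵥw = v⬝ᵥw, and (v⬝ᵥw)² ≤ (v⬝ᵥv)(w⬝ᵥw) = w⬝ᵥw
  have hvv : (v : Fin n → ℝ) ⬝ᵥ (v : Fin n → ℝ) = 1 := by
    have := @real_inner_self_eq_norm_sq (EuclideanSpace ℝ (Fin n)) _ _ v
    rw [hv] at this
    simpa [-inner_self_eq_norm_sq_to_K, PiLp.inner_apply, RCLike.inner_apply, dotProduct, mul_comm] using this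
  have hvw : (v : Fin n → ℝ) ⬝ᵥ w = w ⬝ᵥ w := by
    show (v : Fin n → ℝ) ⬝ᵥ (A *ᵥ (v : Fin n → ℝ)) = w ⬝ᵥ w
    conv_lhs => rw [← hAproj]
    rw [← Matrix.mulVec_mulVec, Matrix.dotProduct_mulVec ((v : Fin n → ℝ)) A,
      ← Matrix.mulVec_transpose, hAsymm]
  have hcs2 : ((v : Fin n → ℝ) ⬝ᵥ w)^2 ≤ ((v : Fin n → ℝ) ⬝ᵥ (v : Fin n → ℝ)) * (w ⬝ᵥ w) := by
    have := @real_inner_mul_inner_self_le (EuclideanSpace ℝ (Fin n)) _ _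
      v ((WithLp.equiv 2 _).symm w)
    simpa [-inner_self_eq_norm_sq_to_K, PiLp.inner_apply, RCLike.inner_apply, dotProduct, sq, mul_comm] using this
  have hw1 : w ⬝ᵥ w ≤ 1 := by
    rw [hvv, one_mul, hvw] at hcs2
    nlinarith [hww]
  nlinarith [hcs, sq_nonneg (η * (y ⬝ᵥ w) - t), mul_nonneg hη0.le hyy,
    mul_nonneg (mul_nonneg hη0.le hη0.le) (mul_nonneg hyy hww), sq_nonneg t,
    mul_le_of_le_one_right (mul_nonneg hη0.le hyy) hη1]
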